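/- arXiv:1307.6808 — 5 statements merged into one kernel-verified Lean document; each statement's English description precedes it below -/
import Mathlib

section
/- Let n, n' be positive integers with n ≥ 2, c ∈ ℂ^n, c' ∈ ℂ^{n'}, and k ∈ {1,…,n−1}. Let c^{(s_k)} denote the tuple obtained from c by exchanging c_k and c_{k+1}. Then on V^{⊗n} ⊗ V^{⊗n'}, for all u ∈ ℂ: P_{k,k+1} R_{k+1,k}(c_{k+1}−c_k) · R_{c,c'}(u) = R_{c^{(s_k)},c'}(u) · P_{k,k+1} R_{k+1,k}(c_{k+1}−c_k), where P_{k,k+1} and R_{k+1,k}(c_{k+1}−c_k) act on the factors k, k+1 of the first block V^{⊗n} and identically elsewhere, and R_{k+1,k}(u) := P R(u) P acting on those two factors. -/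
/-!
We model the finite-dimensional complex vector space `V` as `ℂ^N` (i.e. `Fin N → ℂ`),
so that `V^{⊗ n}` is `(Fin n → Fin N) → ℂ` and endomorphisms of `V^{⊗ n}` are matrices
indexed by multi-indices `Fin n → Fin N`.
-/

open scoped BigOperators

noncomputable section

/-- Endomorphisms of `V ⊗ V` for `V = ℂ^N`. -/
abbrev End2 (N : ℕ) := Matrix (Fin N × Fin N) (Fin N × Fin N) ℂ

/-- Endomorphisms of `V^{⊗ n}` for `V = ℂ^N`. -/
abbrev EndT (N n : ℕ) := Matrix (Fin n → Fin N) (Fin n → Fin N) ℂ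

/-- `X_{a,b}` : the endomorphism `X` of `V ⊗ V` applied to the tensor factors `a` and `b`
(in that order) of `V^{⊗ n}`, and the identity on all other factors. -/
def op2 (N n : ℕ) (X : End2 N) (a b : Fin n) : EndT N n :=
  fun f g => X (f a, f b) (g a, g b) *
    ∏ i : Fin n, if i ≠ a ∧ i ≠ b then (if f i = g i then (1 : ℂ) else 0) else 1

/-- The flip (permutation) operator `P : x ⊗ y ↦ y ⊗ x` on `V ⊗ V`. -/
def flipMat (N : ℕ) : End2 N := fun p q => if p.1 = q.2 ∧ p.2 = q.1 then 1 else 0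

/-- `R` is a solution of the Yang--Baxter equation (with additive spectral parameters)
on `V ⊗ V ⊗ V`:  `R₁₂(u) R₁₃(u+v) R₂₃(v) = R₂₃(v) R₁₃(u+v) R₁₂(u)`. -/
def YangBaxter (N : ℕ) (R : ℂ → End2 N) : Prop :=
  ∀ u v : ℂ,
    op2 N 3 (R u) 0 1 * op2 N 3 (R (u + v)) 0 2 * op2 N 3 (R v) 1 2 =
    op2 N 3 (R v) 1 2 * op2 N 3 (R (u + v)) 0 2 * op2 N 3 (R u) 0 1

/-- The fused operator `R_{c,c'}(u)`, acting on `V^{⊗ m}`, where the `n` factors of the first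
block are embedded via `a` and the `n'` factors of the second block via `b`:
`R_{c,c'}(u) = ∏→_{i=1..n'} [ R_{n,i'}(u+c_n−c'_i) ⋯ R_{2,i'}(u+c_2−c'_i) R_{1,i'}(u+c_1−c'_i) ]`. -/
def fusedOp (N : ℕ) (R : ℂ → End2 N) {m n n' : ℕ} (a : Fin n → Fin m) (b : Fin n' → Fin m)
    (c : Fin n → ℂ) (c' : Fin n' → ℂ) (u : ℂ) : EndT N m :=
  ((List.finRange n').map fun i =>
    (((List.finRange n).reverse).map fun k =>
      op2 N m (R (u + c k - c' i)) (a k) (b i)).prod).prod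

/-- The list of pairs `(i,j)` with `i < j`, in lexicographic order. -/
def lexPairs (n : ℕ) : List (Fin n × Fin n) :=
  (List.finRange n).flatMap fun i =>
    ((List.finRange n).filter fun j => decide (i < j)).map fun j => (i, j)

/-- The operator `F(c) = ∏→_{1 ≤ i < j ≤ n} R_{i,j}(c_i − c_j)` on `V^{⊗ n}`
(product over the pairs `i < j` in lexicographic order). -/
def Fop (N : ℕ) (R : ℂ → End2 N) {n : ℕ} (c : Fin n → ℂ) : EndT N n :=
  ((lexPairs n).map fun p => op2 N n (R (c p.1 - c p.2)) p.1 p.2).prod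

/-- The endomorphism of `V^{⊗ n}` embedded into `V^{⊗ m}`, acting on the factors listed
by `e` and identically on all other factors. -/
def opBlock (N : ℕ) {m n : ℕ} (e : Fin n → Fin m) (X : EndT N n) : EndT N m :=
  fun f g => X (f ∘ e) (g ∘ e) *
    ∏ i : Fin m, if ∀ k, e k ≠ i then (if f i = g i then (1 : ℂ) else 0) else 1

/-- The operator `P_π` on `V^{⊗ n}` permuting the tensor factors:
`P_π (x_1 ⊗ ⋯ ⊗ x_n) = x_{π(1)} ⊗ ⋯ ⊗ x_{π(n)}`. -/
def permMat (N n : ℕ) (π : Equiv.Perm (Fin n)) : EndT N n :=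
  fun f g => if f = g ∘ π then 1 else 0

/-- The tensor product of a vector of `V^{⊗ n}` and a vector of `V^{⊗ n'}`,
as a vector of `V^{⊗ (n+n')}`. -/
def tensVec (N : ℕ) {n n' : ℕ} (x : (Fin n → Fin N) → ℂ) (y : (Fin n' → Fin N) → ℂ) :
    (Fin (n + n') → Fin N) → ℂ :=
  fun f => x (fun i => f (Fin.castAdd n' i)) * y (fun j => f (Fin.natAdd n j))

end

lemma prod_ite_delta {m N : ℕ} (p : Fin m → Prop) [DecidablePred p] (f g : Fin m → Fin N) :
    (∏ i, if p i then (if f i = g i then (1:ℂ) else 0) else 1) =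
    if ∀ i, p i → f i = g i then 1 else 0 := by
  split_ifs with h
  · apply Finset.prod_eq_one; intro i _
    by_cases hp : p i
    · simp [hp, h i hp]
    · simp [hp]
  · push_neg at h; obtain ⟨i, hp, hf⟩ := h
    apply Finset.prod_eq_zero (Finset.mem_univ i); simp [hp, hf]

lemma op2_apply {N m : ℕ} (X : End2 N) (a b : Fin m) (f g : Fin m → Fin N) :
    op2 N m X a b f g =
      X (f a, f b) (g a, g b) *
        (if ∀ i, i ≠ a → i ≠ b → f i = g i then 1 else 0) := by
  rw [op2, prod_ite_delta (fun i => i ≠ a ∧ i ≠ b)]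
  simp only [and_imp]

lemma permMat_mul {N m : ℕ} (π : Equiv.Perm (Fin m)) (M : EndT N m) (f g : Fin m → Fin N) :
    (permMat N m π * M) f g = M (f ∘ π.symm) g := by
  rw [Matrix.mul_apply]
  rw [Finset.sum_eq_single (f ∘ π.symm)]
  · simp [permMat]
    intro h; exfalso; apply h; ext i; simp
  · intro h _ hne
    have : ¬ (f = h ∘ π) := by
      intro he; apply hne; ext i; simp [he]
    simp [permMat, this]
  · simp

lemma mul_permMat {N m : ℕ} (π : Equiv.Perm (Fin m)) (M : EndT N m) (f g : Fin m → Fin N) :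
    (M * permMat N m π) f g = M f (g ∘ π) := by
  rw [Matrix.mul_apply]
  rw [Finset.sum_eq_single (g ∘ π)]
  · simp [permMat]
  · intro h _ hne
    simp [permMat]
    intro he; exact absurd he hne
  · simp

lemma flip_eq_perm {N m : ℕ} (a b : Fin m) (hab : a ≠ b) :
    op2 N m (flipMat N) a b = permMat N m (Equiv.swap a b) := by
  ext f g
  rw [op2_apply, permMat, flipMat]
  by_cases h : f = g ∘ (Equiv.swap a b)
  · subst h
    simp [Equiv.swap_apply_left, Equiv.swap_apply_right]
    intro i hia hib; simp [Equiv.swap_apply_of_ne_of_ne hia hib]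
  · simp only [h, if_false]
    by_cases h1 : f a = g b ∧ f b = g a
    · simp only [h1, if_true, true_and]
      rw [if_neg, mul_zero]
      intro hall
      apply h; ext i
      rcases eq_or_ne i a with rfl | hia
      · simp [Equiv.swap_apply_left, h1.1]
      rcases eq_or_ne i b with rfl | hib
      · simp [Equiv.swap_apply_right, h1.2]
      · simp [Equiv.swap_apply_of_ne_of_ne hia hib, hall i hia hib]
    · rw [if_neg h1, zero_mul]

lemma flip_push {N m : ℕ} (X : End2 N) (a b c : Fin m) (hab : a ≠ b) (hac : a ≠ c) (hbc : b ≠ c) :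
    op2 N m (flipMat N) a b * op2 N m X b c = op2 N m X a c * op2 N m (flipMat N) a b := by
  ext f g
  rw [flip_eq_perm a b hab, permMat_mul, mul_permMat, op2_apply, op2_apply]
  simp only [Function.comp_apply, Equiv.symm_swap, Equiv.swap_apply_left, Equiv.swap_apply_right,
    Equiv.swap_apply_of_ne_of_ne hac.symm hbc.symm]
  congr 1
  apply if_congr ?_ rfl rfl
  constructor
  · intro h i hia hic
    have h1 : Equiv.swap a b i ≠ b := by
      intro e
      have := congrArg (Equiv.swap a b) e
      simp at this; exact hia this
    have h2 : Equiv.swap a b i ≠ c := by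
      intro e
      have := congrArg (Equiv.swap a b) e
      simp [Equiv.swap_apply_of_ne_of_ne hac.symm hbc.symm] at this
      exact hic this
    have := h (Equiv.swap a b i) h1 h2
    simpa using this
  · intro h i hib hic
    have h1 : Equiv.swap a b i ≠ a := by
      intro e
      have := congrArg (Equiv.swap a b) e
      simp at this; exact hib this
    have h2 : Equiv.swap a b i ≠ c := by
      intro e
      have := congrArg (Equiv.swap a b) e
      simp [Equiv.swap_apply_of_ne_of_ne hac.symm hbc.symm] at this
      exact hic this
    have := h (Equiv.swap a b i) h1 h2
    simp only [Function.comp_apply, Equiv.swap_apply_self] at this ⊢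
    exact this

lemma flip_symm {N m : ℕ} (a b : Fin m) (hab : a ≠ b) :
    op2 N m (flipMat N) a b = op2 N m (flipMat N) b a := by
  rw [flip_eq_perm a b hab, flip_eq_perm b a hab.symm, Equiv.swap_comm]

lemma flip_push' {N m : ℕ} (X : End2 N) (a b c : Fin m) (hab : a ≠ b) (hac : a ≠ c) (hbc : b ≠ c) :
    op2 N m (flipMat N) a b * op2 N m X a c = op2 N m X b c * op2 N m (flipMat N) a b := by
  rw [flip_symm a b hab, flip_push X b a c hab.symm hbc hac, ← flip_symm a b hab]

lemma flip_conj {N m : ℕ} (X : End2 N) (a b : Fin m) (hab : a ≠ b) :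
    op2 N m (flipMat N) a b * op2 N m X b a = op2 N m X a b * op2 N m (flipMat N) a b := by
  ext f g
  rw [flip_eq_perm a b hab, permMat_mul, mul_permMat, op2_apply, op2_apply]
  simp only [Function.comp_apply, Equiv.symm_swap, Equiv.swap_apply_left, Equiv.swap_apply_right]
  congr 1
  apply if_congr ?_ rfl rfl
  constructor
  · intro h i hia hib
    have := h i hib hia
    simpa [Equiv.swap_apply_of_ne_of_ne hia hib] using this
  · intro h i hib hia
    have := h i hia hib
    simpa [Equiv.swap_apply_of_ne_of_ne hia hib] using this

lemma op2_mul_disjoint {N m : ℕ} (X Y : End2 N) (a b c d : Fin m)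
    (hac : a ≠ c) (had : a ≠ d) (hbc : b ≠ c) (hbd : b ≠ d) (f g : Fin m → Fin N) :
    (op2 N m X a b * op2 N m Y c d) f g =
      X (f a, f b) (g a, g b) * Y (f c, f d) (g c, g d) *
        (if ∀ i, i ≠ a → i ≠ b → i ≠ c → i ≠ d → f i = g i then 1 else 0) := by
  rw [Matrix.mul_apply]
  rw [Finset.sum_eq_single (fun i => if i = a ∨ i = b then g i else f i)]
  · simp only [op2_apply]
    simp only [eq_self_iff_true, true_or, or_true, if_true]
    have e3 : (if c = a ∨ c = b then g c else f c) = f c := by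
      rw [if_neg]; push_neg; exact ⟨hac.symm, hbc.symm⟩
    have e4 : (if d = a ∨ d = b then g d else f d) = f d := by
      rw [if_neg]; push_neg; exact ⟨had.symm, hbd.symm⟩
    rw [e3, e4]
    have e5 : (∀ i, i ≠ a → i ≠ b → f i = (if i = a ∨ i = b then g i else f i)) := by
      intro i hia hib; rw [if_neg (by push_neg; exact ⟨hia, hib⟩)]
    rw [if_pos e5, mul_one]
    have e6 : (∀ i, i ≠ c → i ≠ d → (if i = a ∨ i = b then g i else f i) = g i) ↔
        (∀ i, i ≠ a → i ≠ b → i ≠ c → i ≠ d → f i = g i) := by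
      constructor
      · intro h i hia hib hic hid
        have := h i hic hid
        rwa [if_neg (by push_neg; exact ⟨hia, hib⟩)] at this
      · intro h i hic hid
        by_cases hi : i = a ∨ i = b
        · rw [if_pos hi]
        · rw [if_neg hi]; push_neg at hi; exact h i hi.1 hi.2 hic hid
    rw [if_congr e6 rfl rfl]
    ring
  · intro h _ hne
    rw [Function.ne_iff] at hne
    obtain ⟨i, hi⟩ := hne
    simp only [op2_apply]
    by_cases hiab : i = a ∨ i = b
    · have hig : h i ≠ g i := by rwa [if_pos hiab] at hi
      have : ¬ (∀ j, j ≠ c → j ≠ d → h j = g j) := by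
        intro hall
        rcases hiab with rfl | rfl
        · exact hig (hall i hac had)
        · exact hig (hall i hbc hbd)
      rw [if_neg this]
      ring
    · have hif : f i ≠ h i := by rw [if_neg hiab] at hi; exact fun e => hi e.symm
      push_neg at hiab
      have : ¬ (∀ j, j ≠ a → j ≠ b → f j = h j) := fun hall => hif (hall i hiab.1 hiab.2)
      rw [if_neg this]
      ring
  · simp

lemma op2_commute_disjoint {N m : ℕ} (X Y : End2 N) (a b c d : Fin m)
    (hac : a ≠ c) (had : a ≠ d) (hbc : b ≠ c) (hbd : b ≠ d) :
    Commute (op2 N m X a b) (op2 N m Y c d) := by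
  unfold Commute SemiconjBy
  ext f g
  rw [op2_mul_disjoint X Y a b c d hac had hbc hbd,
    op2_mul_disjoint Y X c d a b hac.symm hbc.symm had.symm hbd.symm]
  have hiff : (∀ i, i ≠ a → i ≠ b → i ≠ c → i ≠ d → f i = g i) ↔
      (∀ i, i ≠ c → i ≠ d → i ≠ a → i ≠ b → f i = g i) := by
    constructor <;> (intro h i h1 h2 h3 h4; exact h i h3 h4 h1 h2)
  rw [if_congr hiff rfl rfl]
  ring


lemma opBlock_apply {N m nn : ℕ} (e : Fin nn → Fin m) (X : EndT N nn) (f g : Fin m → Fin N) :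
    opBlock N e X f g = X (f ∘ e) (g ∘ e) *
      (if ∀ i, (∀ k, e k ≠ i) → f i = g i then 1 else 0) := by
  rw [opBlock, prod_ite_delta (fun i => ∀ k, e k ≠ i)]

lemma delta_mul_delta {P Q R : Prop} [Decidable P] [Decidable Q] [Decidable R]
    (h : P ∧ Q ↔ R) :
    (if P then (1:ℂ) else 0) * (if Q then 1 else 0) = if R then 1 else 0 := by
  split_ifs <;> simp_all <;> tauto

lemma opBlock_mul {N m nn : ℕ} (e : Fin nn → Fin m) (he : Function.Injective e)
    (X Y : EndT N nn) :
    opBlock N e X * opBlock N e Y = opBlock N e (X * Y) := by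
  classical
  ext f g
  set ι : (Fin nn → Fin N) → (Fin m → Fin N) :=
    fun p i => if h : ∃ k, e k = i then p h.choose else f i with hι
  have hcomp : ∀ p, ι p ∘ e = p := by
    intro p; funext k
    have hx : ∃ k', e k' = e k := ⟨k, rfl⟩
    simp only [hι, Function.comp_apply, dif_pos hx]
    exact congrArg p (he hx.choose_spec)
  have hoff : ∀ p i, (∀ k, e k ≠ i) → ι p i = f i := by
    intro p i hi
    have : ¬ ∃ k, e k = i := by push_neg; exact hi
    simp only [hι, dif_neg this]
  have hinj : Function.Injective ι := by
    intro p q hpq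
    have h2 : ι p ∘ e = ι q ∘ e := by rw [hpq]
    rwa [hcomp, hcomp] at h2
  rw [Matrix.mul_apply, opBlock_apply, Matrix.mul_apply, Finset.sum_mul]
  rw [← Finset.sum_subset (Finset.subset_univ ((Finset.univ.image ι)))]
  · rw [Finset.sum_image (fun p _ q _ h => hinj h)]
    apply Finset.sum_congr rfl
    intro p _
    rw [opBlock_apply, opBlock_apply, hcomp]
    have h1 : (∀ i, (∀ k, e k ≠ i) → f i = ι p i) := fun i hi => (hoff p i hi).symm
    rw [if_pos h1, mul_one]
    have h2 : (∀ i, (∀ k, e k ≠ i) → ι p i = g i) ↔ (∀ i, (∀ k, e k ≠ i) → f i = g i) := by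
      constructor
      · intro h i hi; rw [← hoff p i hi]; exact h i hi
      · intro h i hi; rw [hoff p i hi]; exact h i hi
    rw [if_congr h2 rfl rfl]
    ring
  · intro h _ hnotin
    rw [opBlock_apply, opBlock_apply]
    have : ¬ (∀ i, (∀ k, e k ≠ i) → f i = h i) := by
      intro hall
      apply hnotin
      rw [Finset.mem_image]
      refine ⟨h ∘ e, Finset.mem_univ _, ?_⟩
      funext i
      by_cases hx : ∃ k, e k = i
      · simp only [hι, dif_pos hx, Function.comp_apply, hx.choose_spec]
      · simp only [hι, dif_neg hx]
        push_neg at hx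
        exact hall i hx
    rw [if_neg this]
    ring

lemma opBlock_op2 {N m nn : ℕ} (e : Fin nn → Fin m) (he : Function.Injective e)
    (X : End2 N) (i j : Fin nn) :
    opBlock N e (op2 N nn X i j) = op2 N m X (e i) (e j) := by
  ext f g
  rw [opBlock_apply, op2_apply, op2_apply]
  simp only [Function.comp_apply]
  rw [mul_assoc]
  congr 1
  apply delta_mul_delta
  constructor
  · rintro ⟨h1, h2⟩ x hxi hxj
    by_cases hx : ∃ k, e k = x
    · obtain ⟨k, rfl⟩ := hx
      exact h1 k (fun h => hxi (by rw [h])) (fun h => hxj (by rw [h]))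
    · push_neg at hx
      exact h2 x hx
  · intro h
    constructor
    · intro k hki hkj
      exact h (e k) (fun hh => hki (he hh)) (fun hh => hkj (he hh))
    · intro x hx
      exact h x (fun hh => (hx i) hh.symm) (fun hh => (hx j) hh.symm)


lemma ybe_embed {N : ℕ} {R : ℂ → End2 N} (hR : YangBaxter N R) {m : ℕ} (a b c : Fin m)
    (hab : a ≠ b) (hac : a ≠ c) (hbc : b ≠ c) (u v : ℂ) :
    op2 N m (R u) a b * op2 N m (R (u + v)) a c * op2 N m (R v) b c =
    op2 N m (R v) b c * op2 N m (R (u + v)) a c * op2 N m (R u) a b := by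
  have he : Function.Injective ![a, b, c] := by
    intro x y hxy
    fin_cases x <;> fin_cases y <;> simp_all
  have e0 : (![a, b, c] : Fin 3 → Fin m) 0 = a := rfl
  have e1 : (![a, b, c] : Fin 3 → Fin m) 1 = b := rfl
  have e2 : (![a, b, c] : Fin 3 → Fin m) 2 = c := rfl
  have h01 : op2 N m (R u) a b = opBlock N ![a, b, c] (op2 N 3 (R u) 0 1) := by
    rw [opBlock_op2 _ he, e0, e1]
  have h02 : op2 N m (R (u + v)) a c = opBlock N ![a, b, c] (op2 N 3 (R (u + v)) 0 2) := by
    rw [opBlock_op2 _ he, e0, e2]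
  have h12 : op2 N m (R v) b c = opBlock N ![a, b, c] (op2 N 3 (R v) 1 2) := by
    rw [opBlock_op2 _ he, e1, e2]
  rw [h01, h02, h12, opBlock_mul _ he, opBlock_mul _ he, hR u v,
    ← opBlock_mul _ he, ← opBlock_mul _ he]

lemma intertwine_list_prod {M : Type*} [Monoid M] (S : M) {ι : Type*} (F F' : ι → M)
    (l : List ι) (h : ∀ i ∈ l, S * F i = F' i * S) :
    S * (l.map F).prod = (l.map F').prod * S := by
  induction l with
  | nil => simp
  | cons x xs ih =>
    simp only [List.map_cons, List.prod_cons]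
    rw [← mul_assoc, h x (by simp), mul_assoc,
      ih (fun i hi => h i (List.mem_cons_of_mem _ hi)), ← mul_assoc]

lemma mul_eq_ext {M : Type*} [Monoid M] {a b c d : M} (h : a * b = c * d) (x : M) :
    a * (b * x) = c * (d * x) := by rw [← mul_assoc, h, mul_assoc]

lemma sandwich {M : Type*} [Monoid M] (S pxs pys pxs' pys' a b a' b' : M)
    (h1 : S * pxs = pxs' * S) (h2 : S * pys = pys' * S)
    (hmid : S * (a * b) = (a' * b') * S) :
    S * (pxs * (a * (b * pys))) = pxs' * (a' * (b' * pys')) * S := by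
  have hmid' : S * a * b = a' * b' * S := by rw [mul_assoc, hmid, mul_assoc]
  rw [← mul_assoc, h1, mul_assoc pxs' S, ← mul_assoc S a, ← mul_assoc (S*a) b, hmid',
    mul_assoc (a' * b') S pys, h2, ← mul_assoc, ← mul_assoc, ← mul_assoc]
  simp only [mul_assoc]

lemma column_aux {N : ℕ} {R : ℂ → End2 N} (hR : YangBaxter N R) {m : ℕ}
    (n : ℕ) (c : Fin n → ℂ) (k : ℕ) (hk : k + 1 < n) (hk0 : k < n)
    (em : Fin n → Fin m) (hem : Function.Injective em) (D : Fin m)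
    (hD : ∀ j, em j ≠ D) (x : ℂ) (S : EndT N m)
    (hS : S = op2 N m (R (c ⟨k+1,hk⟩ - c ⟨k,hk0⟩)) (em ⟨k,hk0⟩) (em ⟨k+1,hk⟩) *
          op2 N m (flipMat N) (em ⟨k,hk0⟩) (em ⟨k+1,hk⟩)) :
    S * (((List.finRange n).reverse).map fun j => op2 N m (R (x + c j)) (em j) D).prod =
    (((List.finRange n).reverse).map fun j =>
        op2 N m (R (x + (c ∘ Equiv.swap ⟨k,hk0⟩ ⟨k+1,hk⟩) j)) (em j) D).prod * S := by
  classical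
  have hAB : em ⟨k,hk0⟩ ≠ em ⟨k+1,hk⟩ := by
    intro h; have := hem h; simp [Fin.ext_iff] at this
  have hAD : em ⟨k,hk0⟩ ≠ D := hD _
  have hBD : em ⟨k+1,hk⟩ ≠ D := hD _
  -- natural number indexed factors
  set G : ℕ → EndT N m :=
    (fun j => if h : j < n then op2 N m (R (x + c ⟨j, h⟩)) (em ⟨j, h⟩) D else 1) with hG
  set G' : ℕ → EndT N m :=
    (fun j => if h : j < n then
      op2 N m (R (x + (c ∘ Equiv.swap ⟨k,hk0⟩ ⟨k+1,hk⟩) ⟨j, h⟩)) (em ⟨j, h⟩) D else 1) with hG'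
  have hmap : ∀ (d : Fin n → ℂ) (Gd : ℕ → EndT N m),
      (Gd = fun j => if h : j < n then op2 N m (R (x + d ⟨j, h⟩)) (em ⟨j, h⟩) D else 1) →
      ((List.finRange n).map fun j => op2 N m (R (x + d j)) (em j) D) =
        (List.range n).map Gd := by
    intro d Gd hGd
    apply List.ext_getElem
    · simp
    · intro idx h1 h2
      have hidx : idx < n := by simpa using h2
      simp only [List.getElem_map, List.getElem_finRange, List.getElem_range, hGd]
      rw [dif_pos hidx]
      rfl
  -- commutation away from k, k+1
  have hout : ∀ j, j ≠ k → j ≠ k + 1 → S * G j = G' j * S := by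
    intro j hjk hjk1
    by_cases hj : j < n
    · have hne1 : em ⟨k,hk0⟩ ≠ em ⟨j,hj⟩ := by
        intro h; have := hem h; simp [Fin.ext_iff] at this; exact hjk this.symm
      have hne2 : em ⟨k+1,hk⟩ ≠ em ⟨j,hj⟩ := by
        intro h; have := hem h; simp [Fin.ext_iff] at this; exact hjk1 this.symm
      have hGG' : G j = G' j := by
        rw [hG, hG']
        simp only [dif_pos hj]
        have : Equiv.swap (⟨k,hk0⟩ : Fin n) ⟨k+1,hk⟩ ⟨j,hj⟩ = ⟨j,hj⟩ :=
          Equiv.swap_apply_of_ne_of_ne (by simp [Fin.ext_iff]; omega)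
            (by simp [Fin.ext_iff]; omega)
        simp [this]
      have hcomm : Commute S (G j) := by
        rw [hS, hG]
        simp only [dif_pos hj]
        exact Commute.mul_left
          (op2_commute_disjoint _ _ _ _ _ _ hne1 hAD hne2 hBD)
          (op2_commute_disjoint _ _ _ _ _ _ hne1 hAD hne2 hBD)
      rw [← hGG', hcomm.eq]
    · have h1 : G j = 1 := by rw [hG]; simp [dif_neg hj]
      have h2 : G' j = 1 := by rw [hG']; simp [dif_neg hj]
      rw [h1, h2, mul_one, one_mul]
  -- the middle exchange
  have hGk1 : G (k+1) = op2 N m (R (x + c ⟨k+1,hk⟩)) (em ⟨k+1,hk⟩) D := by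
    rw [hG]; simp only [dif_pos hk]
  have hGk : G k = op2 N m (R (x + c ⟨k,hk0⟩)) (em ⟨k,hk0⟩) D := by
    rw [hG]; simp only [dif_pos hk0]
  have hGk1' : G' (k+1) = op2 N m (R (x + c ⟨k,hk0⟩)) (em ⟨k+1,hk⟩) D := by
    rw [hG']
    simp only [dif_pos hk, Function.comp_apply, Equiv.swap_apply_right]
  have hGk' : G' k = op2 N m (R (x + c ⟨k+1,hk⟩)) (em ⟨k,hk0⟩) D := by
    rw [hG']
    simp only [dif_pos hk0, Function.comp_apply, Equiv.swap_apply_left]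
  have hβ : x + c ⟨k+1,hk⟩ = (c ⟨k+1,hk⟩ - c ⟨k,hk0⟩) + (x + c ⟨k,hk0⟩) := by ring
  have hyb := ybe_embed hR (em ⟨k,hk0⟩) (em ⟨k+1,hk⟩) D hAB hAD hBD
      (c ⟨k+1,hk⟩ - c ⟨k,hk0⟩) (x + c ⟨k,hk0⟩)
  have hmid : S * (G (k+1) * G k) = (G' (k+1) * G' k) * S := by
    rw [hGk1, hGk, hGk1', hGk', hS]
    rw [mul_assoc]
    rw [mul_eq_ext (flip_push (R (x + c ⟨k+1,hk⟩)) _ _ _ hAB hAD hBD) _]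
    rw [flip_push' (R (x + c ⟨k,hk0⟩)) _ _ _ hAB hAD hBD]
    rw [hβ]
    simp only [← mul_assoc]
    rw [hyb]
  -- decompose the range list
  have hsplit : (List.range n).reverse =
      ((List.range (n-(k+2))).map (fun t => (k+2) + t)).reverse ++
        ((k+1) :: k :: (List.range k).reverse) := by
    have h1 : n = (k+2) + (n - (k+2)) := by omega
    conv_lhs => rw [h1, List.range_add, List.range_succ, List.range_succ]
    simp [List.reverse_append]
  have hmain : ∀ (Gd : ℕ → EndT N m), ((List.range n).reverse.map Gd).prod =
      ((((List.range (n-(k+2))).map (fun t => (k+2) + t)).reverse.map Gd).prod *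
        (Gd (k+1) * (Gd k * (((List.range k).reverse.map Gd)).prod))) := by
    intro Gd
    rw [hsplit]
    simp [List.map_append, List.prod_append, List.prod_cons]
  -- assemble
  rw [List.map_reverse, List.map_reverse, hmap c G hG, hmap _ G' hG',
    ← List.map_reverse, ← List.map_reverse]
  rw [hmain G, hmain G']
  apply sandwich
  · apply intertwine_list_prod
    intro j hj
    simp only [List.mem_reverse, List.mem_map, List.mem_range] at hj
    obtain ⟨t, ht, rfl⟩ := hj
    exact hout _ (by omega) (by omega)
  · apply intertwine_list_prod
    intro j hj
    simp only [List.mem_reverse, List.mem_range] at hj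
    exact hout _ (by omega) (by omega)
  · exact hmid


lemma main_aux (N : ℕ) (R : ℂ → End2 N) (hR : YangBaxter N R)
    (n n' : ℕ) (c : Fin n → ℂ) (c' : Fin n' → ℂ)
    (k : ℕ) (hk : k + 1 < n) (hk0 : k < n) (u : ℂ) :
    op2 N (n + n') (flipMat N)
        (Fin.castAdd n' ⟨k, hk0⟩) (Fin.castAdd n' ⟨k + 1, hk⟩) *
      op2 N (n + n') (R (c ⟨k + 1, hk⟩ - c ⟨k, hk0⟩))
        (Fin.castAdd n' ⟨k + 1, hk⟩) (Fin.castAdd n' ⟨k, hk0⟩) *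
      fusedOp N R (Fin.castAdd n') (Fin.natAdd n) c c' u =
    fusedOp N R (Fin.castAdd n') (Fin.natAdd n)
        (c ∘ Equiv.swap ⟨k, hk0⟩ ⟨k + 1, hk⟩) c' u *
      (op2 N (n + n') (flipMat N)
        (Fin.castAdd n' ⟨k, hk0⟩) (Fin.castAdd n' ⟨k + 1, hk⟩) *
      op2 N (n + n') (R (c ⟨k + 1, hk⟩ - c ⟨k, hk0⟩))
        (Fin.castAdd n' ⟨k + 1, hk⟩) (Fin.castAdd n' ⟨k, hk0⟩)) := by
  have hAB : (Fin.castAdd n' (⟨k, hk0⟩ : Fin n)) ≠ Fin.castAdd n' ⟨k + 1, hk⟩ := by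
    simp [Fin.ext_iff]
  have hem : Function.Injective (Fin.castAdd (n := n) n') := fun a b h => by
    simpa [Fin.ext_iff] using h
  have hS := flip_conj (R (c ⟨k + 1, hk⟩ - c ⟨k, hk0⟩))
    (Fin.castAdd n' ⟨k, hk0⟩) (Fin.castAdd n' ⟨k + 1, hk⟩) hAB
  rw [hS]
  simp only [fusedOp]
  apply intertwine_list_prod
  intro i _
  have hD : ∀ j : Fin n, Fin.castAdd n' j ≠ Fin.natAdd n i := by
    intro j h
    have hval := congrArg Fin.val h
    simp only [Fin.coe_castAdd, Fin.coe_natAdd] at hval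
    have := j.isLt
    omega
  have hx : ∀ y : ℂ, u + y - c' i = (u - c' i) + y := fun y => by ring

  simp only [hx]
  exact column_aux hR n c k hk hk0 (Fin.castAdd n') hem (Fin.natAdd n i) hD (u - c' i) _ rfl

/-- On `V^{⊗n} ⊗ V^{⊗n'}`:
`P_{k,k+1} R_{k+1,k}(c_{k+1}−c_k) · R_{c,c'}(u) = R_{c^{(s_k)},c'}(u) · P_{k,k+1} R_{k+1,k}(c_{k+1}−c_k)`,
where `c^{(s_k)}` is obtained from `c` by exchanging `c_k` and `c_{k+1}`. -/
theorem fused_swap_intertwining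
    (N : ℕ) (R : ℂ → End2 N) (hR : YangBaxter N R)
    (n n' : ℕ) (hn : 2 ≤ n) (hn' : 0 < n')
    (c : Fin n → ℂ) (c' : Fin n' → ℂ)
    (k : ℕ) (hk : k + 1 < n) (u : ℂ) :
    op2 N (n + n') (flipMat N)
        (Fin.castAdd n' ⟨k, by omega⟩) (Fin.castAdd n' ⟨k + 1, hk⟩) *
      op2 N (n + n') (R (c ⟨k + 1, hk⟩ - c ⟨k, by omega⟩))
        (Fin.castAdd n' ⟨k + 1, hk⟩) (Fin.castAdd n' ⟨k, by omega⟩) *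
      fusedOp N R (Fin.castAdd n') (Fin.natAdd n) c c' u =
    fusedOp N R (Fin.castAdd n') (Fin.natAdd n)
        (c ∘ Equiv.swap ⟨k, by omega⟩ ⟨k + 1, hk⟩) c' u *
      (op2 N (n + n') (flipMat N)
        (Fin.castAdd n' ⟨k, by omega⟩) (Fin.castAdd n' ⟨k + 1, hk⟩) *
      op2 N (n + n') (R (c ⟨k + 1, hk⟩ - c ⟨k, by omega⟩))
        (Fin.castAdd n' ⟨k + 1, hk⟩) (Fin.castAdd n' ⟨k, by omega⟩)) := by
  exact main_aux N R hR n n' c c' k hk (by omega) u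
end

section
/- Let n ≥ 3 and let i, j, k be pairwise distinct elements of {1,…,n}. Then in the group algebra ℂS_n, for all u, v ∈ ℂ with u ≠ 0, v ≠ 0 and u+v ≠ 0: (1 − (i,j)/u)(1 − (i,k)/(u+v))(1 − (j,k)/v) = (1 − (j,k)/v)(1 − (i,k)/(u+v))(1 − (i,j)/u). -/
private lemma swap_rot {α : Type*} [DecidableEq α] (i j k : α)
    (hij : i ≠ j) (hik : i ≠ k) (hjk : j ≠ k) :
    Equiv.swap i j * Equiv.swap i k = Equiv.swap i k * Equiv.swap j k := by
  ext x
  simp only [Equiv.Perm.mul_apply, Equiv.swap_apply_def]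
  split_ifs <;> simp_all

/-- Yang--Baxter relation for the Baxterized elements of the group
algebra `ℂS_n`: for pairwise distinct `i, j, k` and `u, v, u+v ≠ 0`,
`(1 − (i,j)/u)(1 − (i,k)/(u+v))(1 − (j,k)/v) = (1 − (j,k)/v)(1 − (i,k)/(u+v))(1 − (i,j)/u)`. -/
theorem baxterized_yang_baxter
    (n : ℕ) (hn : 3 ≤ n) (i j k : Fin n)
    (hij : i ≠ j) (hik : i ≠ k) (hjk : j ≠ k)
    (u v : ℂ) (hu : u ≠ 0) (hv : v ≠ 0) (huv : u + v ≠ 0) :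
    ((1 : MonoidAlgebra ℂ (Equiv.Perm (Fin n))) -
        u⁻¹ • MonoidAlgebra.of ℂ (Equiv.Perm (Fin n)) (Equiv.swap i j)) *
      (1 - (u + v)⁻¹ • MonoidAlgebra.of ℂ (Equiv.Perm (Fin n)) (Equiv.swap i k)) *
      (1 - v⁻¹ • MonoidAlgebra.of ℂ (Equiv.Perm (Fin n)) (Equiv.swap j k)) =
    (1 - v⁻¹ • MonoidAlgebra.of ℂ (Equiv.Perm (Fin n)) (Equiv.swap j k)) *
      (1 - (u + v)⁻¹ • MonoidAlgebra.of ℂ (Equiv.Perm (Fin n)) (Equiv.swap i k)) *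
      (1 - u⁻¹ • MonoidAlgebra.of ℂ (Equiv.Perm (Fin n)) (Equiv.swap i j)) := by
  set σ := Equiv.swap i j with hσ
  set τ := Equiv.swap i k with hτ
  set ρ := Equiv.swap j k with hρ
  -- group identities
  have p1 : σ * τ = τ * ρ := swap_rot i j k hij hik hjk
  have p4 : σ * ρ = ρ * τ := by
    rw [hσ, hτ, hρ, Equiv.swap_comm i j]
    exact swap_rot j i k (Ne.symm hij) hjk hik
  have p2 : ρ * σ = τ * ρ := by
    have h := congrArg Inv.inv p4
    simpa [mul_inv_rev, Equiv.swap_inv, hσ, hτ, hρ] using h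
  have p3 : τ * σ = ρ * τ := by
    have h := congrArg Inv.inv p1
    simpa [mul_inv_rev, Equiv.swap_inv, hσ, hτ, hρ] using h
  have p5 : σ * (τ * ρ) = τ := by
    rw [← mul_assoc, p1, mul_assoc, Equiv.swap_mul_self, mul_one]
  have p6 : ρ * (ρ * τ) = τ := by
    rw [← mul_assoc, Equiv.swap_mul_self, one_mul]
  have p7 : ρ * ρ = 1 := Equiv.swap_mul_self j k
  have hc : v⁻¹ * (u + v)⁻¹ + u⁻¹ * (u + v)⁻¹ = u⁻¹ * v⁻¹ := by
    field_simp
  simp only [mul_sub, sub_mul, one_mul, mul_one, smul_mul_smul_comm, ← map_mul,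
    mul_assoc, p1, p2, p3, p4, p5, p6, p7, mul_one, map_one]
  match_scalars <;> field_simp <;> ring
end

section
/- Let n ≥ 2 and let u_1, …, u_n ∈ ℂ be pairwise distinct. Then in ℂS_n: ∏_{i=1,…,n−1}^{→} [ (s_i − 1/(u_1−u_{i+1})) (s_{i−1} − 1/(u_2−u_{i+1})) ⋯ (s_2 − 1/(u_{i−1}−u_{i+1})) (s_1 − 1/(u_i−u_{i+1})) ] = [ ∏_{1≤i<j≤n}^{→} (1 − (i,j)/(u_i−u_j)) ] · w_n, where the outer product on the left is taken with i increasing from 1 to n−1 (and inside the i-th group the j-th factor, j = 1,…,i, is (s_{i+1−j} − 1/(u_j−u_{i+1}))), the product on the right is over pairs i < j in lexicographic order, s_a := (a,a+1), and w_n is the longest element of S_n (w_n(i) = n−i+1). -/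
noncomputable section

namespace FusionAux

open Equiv List

/-- arithmetic description of the accumulated permutation -/
def af (i j x : ℕ) : ℕ :=
  if x + j ≤ i then i - x else if x + j = i + 1 then i + 1
  else if x ≤ i + 1 then i + 1 - x else x

def ag (i j y : ℕ) : ℕ :=
  if y < j then i + 1 - y else if y ≤ i then i - y
  else if y = i + 1 then i + 1 - j else y

def accE (n i j : ℕ) (h1 : i + 1 < n) (_h2 : j ≤ i + 1) : Equiv.Perm (Fin n) where
  toFun x := ⟨af i j x.val, by have := x.2; unfold af; split_ifs <;> omega⟩
  invFun y := ⟨ag i j y.val, by have := y.2; unfold ag; split_ifs <;> omega⟩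
  left_inv x := by
    apply Fin.ext
    have := x.2
    simp only [af, ag]
    split_ifs <;> omega
  right_inv y := by
    apply Fin.ext
    have := y.2
    simp only [af, ag]
    split_ifs <;> omega

def accP (n i j : ℕ) : Equiv.Perm (Fin n) :=
  if h : i + 1 < n ∧ j ≤ i + 1 then accE n i j h.1 h.2 else 1

variable {n : ℕ}

/-- swap with junk value -/
def sw (n a b : ℕ) : Equiv.Perm (Fin n) :=
  if h : a < n ∧ b < n then Equiv.swap ⟨a, h.1⟩ ⟨b, h.2⟩ else 1

lemma sw_invol (a b : ℕ) : sw n a b * sw n a b = 1 := by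
  unfold sw; split_ifs
  · exact Equiv.swap_mul_self _ _
  · simp

lemma accP_apply_val (i j : ℕ) (h1 : i + 1 < n) (h2 : j ≤ i + 1) (x : Fin n) :
    ((accP n i j) x).val = af i j x.val := by
  rw [accP, dif_pos ⟨h1, h2⟩]; rfl

lemma acc_zero (h : 1 < n) : accP n 0 0 = 1 := by
  ext x
  rw [accP_apply_val 0 0 h (by omega)]
  have := x.2
  simp only [af, Perm.one_apply]
  split_ifs <;> omega

lemma acc_next (i : ℕ) (h : i + 2 < n) : accP n i (i + 1) = accP n (i + 1) 0 := by
  apply Equiv.ext; intro x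
  apply Fin.ext
  rw [accP_apply_val i (i+1) (by omega) (by omega),
    accP_apply_val (i+1) 0 (by omega) (by omega)]
  have := x.2
  simp only [af]
  split_ifs <;> omega

lemma acc_rev (h : 2 ≤ n) : accP n (n - 2) (n - 1) = Fin.revPerm := by
  apply Equiv.ext; intro x
  apply Fin.ext
  rw [accP_apply_val (n-2) (n-1) (by omega) (by omega)]
  have := x.2
  simp only [af, Fin.revPerm_apply, Fin.val_rev]
  split_ifs <;> omega

lemma acc_mul_swap (i j : ℕ) (h1 : i + 1 < n) (hj : j ≤ i) :
    accP n i j * sw n (i - j) (i - j + 1) = accP n i (j + 1) := by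
  apply Equiv.ext; intro x
  apply Fin.ext
  rw [sw, dif_pos ⟨by omega, by omega⟩]
  rw [Equiv.Perm.mul_apply]
  rw [accP_apply_val i (j+1) h1 (by omega)]
  have hx := x.2
  rcases x with ⟨xv, hxv⟩
  rw [Equiv.swap_apply_def]
  split_ifs with e1 e2
  · rw [accP_apply_val i j h1 (by omega)]
    have e1' : xv = i - j := by simpa [Fin.ext_iff] using e1
    simp only [af]
    split_ifs <;> omega
  · rw [accP_apply_val i j h1 (by omega)]
    have e2' : xv = i - j + 1 := by simpa [Fin.ext_iff] using e2
    simp only [af]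
    split_ifs <;> omega
  · rw [accP_apply_val i j h1 (by omega)]
    have e1' : xv ≠ i - j := by simpa [Fin.ext_iff] using e1
    have e2' : xv ≠ i - j + 1 := by simpa [Fin.ext_iff] using e2
    simp only [af]
    split_ifs <;> omega

lemma acc_conj (i j : ℕ) (h1 : i + 1 < n) (hj : j ≤ i) :
    accP n i j * sw n (i - j) (i - j + 1) * (accP n i j)⁻¹ = sw n j (i + 1) := by
  rw [sw, dif_pos ⟨by omega, by omega⟩, sw, dif_pos ⟨by omega, by omega⟩]
  rw [← Equiv.swap_apply_apply]
  congr 1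
  · apply Fin.ext
    rw [accP_apply_val i j h1 (by omega)]
    simp only [af]; split_ifs <;> omega
  · apply Fin.ext
    rw [accP_apply_val i j h1 (by omega)]
    simp only [af]; split_ifs <;> omega

lemma sw_commute (a b c d : ℕ) (h1 : a ≠ c) (h2 : a ≠ d) (h3 : b ≠ c) (h4 : b ≠ d) :
    Commute (sw n a b) (sw n c d) := by
  unfold sw
  split_ifs with e1 e2 e2
  · obtain ⟨ha, hb⟩ := e1
    obtain ⟨hc, hd⟩ := e2
    unfold Commute SemiconjBy
    apply Equiv.ext; intro x
    simp only [Equiv.Perm.mul_apply, Equiv.swap_apply_def, Fin.ext_iff]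
    split_ifs <;> simp_all <;> omega
  · exact Commute.one_right _
  · exact Commute.one_left _
  · exact Commute.one_right _


variable {n : ℕ} (u : Fin n → ℂ)

abbrev R (n : ℕ) := MonoidAlgebra ℂ (Equiv.Perm (Fin n))

def of' (g : Equiv.Perm (Fin n)) : R n := MonoidAlgebra.of ℂ _ g

lemma of'_mul (g h : Equiv.Perm (Fin n)) : of' g * of' h = of' (g * h) :=
  (map_mul (MonoidAlgebra.of ℂ (Equiv.Perm (Fin n))) g h).symm

lemma of'_one : (of' 1 : R n) = 1 := map_one _

lemma pull (g σ : Equiv.Perm (Fin n)) (hσ : σ * σ = 1) (c : ℂ) :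
    of' g * (of' σ - c • 1) = (1 - c • of' (g * σ * g⁻¹)) * of' (g * σ) := by
  have h2 : g * σ * g⁻¹ * (g * σ) = g := by
    group
    rw [mul_assoc, hσ, mul_one]
  rw [mul_sub, sub_mul, one_mul, smul_mul_assoc, of'_mul, of'_mul, h2,
    mul_smul_comm, mul_one]

lemma commute_factor {x y : R n} (h : Commute x y) (a b : ℂ) :
    Commute (1 - a • x) (1 - b • y) := by
  have h1 : Commute (1 - a • x) y :=
    ((Commute.one_left y).sub_left ((h.smul_left a)))
  exact (Commute.one_right _).sub_right ((h1.smul_right b))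


def cc (u : Fin n → ℂ) (a b : ℕ) : ℂ :=
  if h : a < n ∧ b < n then (u ⟨a, h.1⟩ - u ⟨b, h.2⟩)⁻¹ else 0

lemma inner_lemma (i : ℕ) (hi : i + 1 < n) :
    ∀ j, j ≤ i + 1 →
    of' (accP n i 0) *
      ((range j).map fun m => of' (sw n (i - m) (i - m + 1)) - cc u m (i + 1) • 1).prod
    = ((range j).map fun m => 1 - cc u m (i + 1) • of' (sw n m (i + 1))).prod *
        of' (accP n i j) := by
  intro j
  induction j with
  | zero => intro _; simp
  | succ j ih =>
    intro hj
    have hj' : j ≤ i := by omega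
    rw [range_succ, map_append, map_append, prod_append, prod_append,
      map_cons, map_nil, prod_cons, prod_nil, map_cons, map_nil, prod_cons, prod_nil,
      mul_one, mul_one, ← mul_assoc, ih (by omega), mul_assoc,
      pull _ _ (sw_invol _ _), acc_conj i j hi hj', acc_mul_swap i j hi hj',
      ← mul_assoc]

def accA (n : ℕ) : ℕ → Equiv.Perm (Fin n)
  | 0 => 1
  | (i+1) => accP n i (i+1)

lemma accA_eq (i : ℕ) (h : i + 1 < n) : accA n i = accP n i 0 := by
  cases i with
  | zero => exact (acc_zero h).symm
  | succ i => exact acc_next i h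

lemma outer_lemma : ∀ i, i ≤ n - 1 →
    ((range i).map fun m =>
      ((range (m+1)).map fun j => of' (sw n (m - j) (m - j + 1)) - cc u j (m+1) • 1).prod).prod
    = ((range i).map fun m =>
        ((range (m+1)).map fun j => 1 - cc u j (m+1) • of' (sw n j (m+1))).prod).prod *
        of' (accA n i) := by
  intro i
  induction i with
  | zero => intro _; simp [accA, of'_one]
  | succ i ih =>
    intro hi
    have h1 : i + 1 < n := by omega
    rw [range_succ, map_append, map_append, prod_append, prod_append,
      map_cons, map_nil, prod_cons, prod_nil, map_cons, map_nil, prod_cons, prod_nil,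
      mul_one, mul_one, ih (by omega), mul_assoc, accA_eq i h1,
      inner_lemma u i h1 (i+1) le_rfl, ← mul_assoc]
    rfl

def Ffac (u : Fin n → ℂ) (p q : ℕ) : R n := 1 - cc u p q • of' (sw n p q)

def rowL (i k : ℕ) : List (ℕ × ℕ) :=
  ((range k).filter fun j => decide (i < j)).map fun j => (i, j)

def lexL (k : ℕ) : List (ℕ × ℕ) := (range k).flatMap fun i => rowL i k

lemma of'_commute {σ τ : Equiv.Perm (Fin n)} (h : Commute σ τ) :
    Commute (of' σ) (of' τ) := by
  unfold Commute SemiconjBy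
  rw [of'_mul, of'_mul, h.eq]

lemma Ffac_comm (a b c d : ℕ) (h1 : a ≠ c) (h2 : a ≠ d) (h3 : b ≠ c) (h4 : b ≠ d) :
    Commute (Ffac u a b) (Ffac u c d) := by
  exact commute_factor (of'_commute (sw_commute a b c d h1 h2 h3 h4)) _ _

lemma f_comm_row (i k p : ℕ) (hik : i < k) (hip : i < p) :
    Commute (Ffac u i k) (((rowL p k).map fun q => Ffac u q.1 q.2).prod) := by
  apply Commute.list_prod_right
  intro x hx
  simp only [mem_map] at hx
  obtain ⟨q, hq, rfl⟩ := hx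
  simp only [rowL, mem_map, mem_filter, mem_range, decide_eq_true_eq] at hq
  obtain ⟨j, ⟨hj1, hj2⟩, rfl⟩ := hq
  exact Ffac_comm u i k p j (by omega) (by omega) (by omega) (by omega)

lemma rowL_succ (i k : ℕ) (h : i < k) : rowL i (k + 1) = rowL i k ++ [(i, k)] := by
  simp [rowL, range_succ, h]

lemma rowL_last (k : ℕ) : rowL k (k + 1) = [] := by
  simp only [rowL, map_eq_nil_iff]
  apply List.filter_eq_nil_iff.mpr
  intro j hj
  simp only [mem_range] at hj
  simp only [decide_eq_true_eq]
  omega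

lemma pull_col (k : ℕ) : ∀ (l : List ℕ), Pairwise (· < ·) l → (∀ i ∈ l, i < k) →
    (l.map fun i => ((rowL i (k+1)).map fun q => Ffac u q.1 q.2).prod).prod
    = (l.map fun i => ((rowL i k).map fun q => Ffac u q.1 q.2).prod).prod *
      (l.map fun i => Ffac u i k).prod := by
  intro l
  induction l with
  | nil => intro _ _; simp
  | cons i t ih =>
    intro hp hb
    have hik : i < k := hb i mem_cons_self
    rw [pairwise_cons] at hp
    rw [map_cons, map_cons, map_cons, prod_cons, prod_cons, prod_cons,
      ih hp.2 (fun x hx => hb x (mem_cons_of_mem i hx)),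
      rowL_succ i k hik, map_append, prod_append, map_cons, map_nil, prod_cons,
      prod_nil, mul_one]
    have hcomm : Commute (Ffac u i k)
        ((t.map fun i => ((rowL i k).map fun q => Ffac u q.1 q.2).prod).prod) := by
      apply Commute.list_prod_right
      intro x hx
      simp only [mem_map] at hx
      obtain ⟨p, hp', rfl⟩ := hx
      exact f_comm_row u i k p hik (hp.1 p hp')
    rw [mul_assoc, ← mul_assoc (Ffac u i k), hcomm.eq, mul_assoc, ← mul_assoc,
      ← mul_assoc]

lemma prod_flat {α β : Type*} (f : α → List β) (F : β → R n) :
    ∀ (l : List α), ((l.flatMap f).map F).prod = (l.map fun i => ((f i).map F).prod).prod := by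
  intro l
  induction l with
  | nil => simp
  | cons a t ih => simp [flatMap_cons, map_append, prod_append, ih]

lemma reorder : ∀ k, ((lexL k).map fun q => Ffac u q.1 q.2).prod
    = ((range k).map fun m => ((range m).map fun j => Ffac u j m).prod).prod := by
  intro k
  induction k with
  | zero => simp [lexL]
  | succ k ih =>
    rw [lexL, range_succ, flatMap_append, flatMap_cons, flatMap_nil, append_nil,
      rowL_last, append_nil, prod_flat, pull_col u k (range k) pairwise_lt_range
        (fun i hi => mem_range.mp hi)]
    rw [map_append, prod_append, map_cons, map_nil, prod_cons, prod_nil, mul_one]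
    congr 1
    rw [lexL, prod_flat] at ih
    exact ih

lemma map_finRange_eq {β : Type*} (k : ℕ) (f : Fin k → β) (g : ℕ → β)
    (h : ∀ (m : ℕ) (hm : m < k), f ⟨m, hm⟩ = g m) :
    (finRange k).map f = (range k).map g := by
  rw [finRange_eq_pmap_range, map_pmap]
  have : ∀ (l : List ℕ) (H : ∀ a ∈ l, a < k),
      (l.pmap (fun a ha => f ⟨a, ha⟩) H) = l.map g := by
    intro l
    induction l with
    | nil => intro _; simp
    | cons a t ih =>
      intro H
      rw [pmap, map_cons, h a (H a mem_cons_self), ih]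
  exact this _ _

lemma map_filter_finRange {β : Type*} (k : ℕ) (p : Fin k → Bool) (q : ℕ → Bool)
    (f : Fin k → β) (g : ℕ → β)
    (hp : ∀ (m : ℕ) (hm : m < k), p ⟨m, hm⟩ = q m)
    (hf : ∀ (m : ℕ) (hm : m < k), f ⟨m, hm⟩ = g m) :
    ((finRange k).filter p).map f = ((range k).filter q).map g := by
  rw [finRange_eq_pmap_range]
  have : ∀ (l : List ℕ) (H : ∀ a ∈ l, a < k),
      ((l.pmap Fin.mk H).filter p).map f = (l.filter q).map g := by
    intro l
    induction l with
    | nil => intro _; simp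
    | cons a t ih =>
      intro H
      have ha : a < k := H a mem_cons_self
      rw [pmap, filter_cons, filter_cons, hp a ha]
      by_cases hq : q a
      · rw [if_pos hq, if_pos hq, map_cons, map_cons, hf a ha, ih]
      · rw [if_neg hq, if_neg hq, ih]
  exact this _ _

end FusionAux

open FusionAux List

/-- The fusion function of the symmetric group: in `ℂS_n`,
`∏→_{i=1..n−1} [ (s_i − 1/(u_1−u_{i+1})) ⋯ (s_1 − 1/(u_i−u_{i+1})) ]
  = [ ∏→_{1≤i<j≤n} (1 − (i,j)/(u_i−u_j)) ] · w_n`,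
where `s_a = (a,a+1)` and `w_n` is the longest element of `S_n`. -/
theorem fusion_function_formula
    (n : ℕ) (hn : 2 ≤ n) (u : Fin n → ℂ)
    (hu : ∀ i j : Fin n, i ≠ j → u i ≠ u j) :
    ((List.finRange (n - 1)).map fun i =>
      ((List.finRange (i.val + 1)).map fun j =>
        MonoidAlgebra.of ℂ (Equiv.Perm (Fin n))
            (Equiv.swap ⟨i.val - j.val, by have := i.isLt; omega⟩
                        ⟨i.val - j.val + 1, by have := i.isLt; omega⟩) -
          (u ⟨j.val, by have := i.isLt; have := j.isLt; omega⟩ -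
            u ⟨i.val + 1, by have := i.isLt; omega⟩)⁻¹ •
            (1 : MonoidAlgebra ℂ (Equiv.Perm (Fin n)))).prod).prod =
    ((lexPairs n).map fun p =>
      (1 : MonoidAlgebra ℂ (Equiv.Perm (Fin n))) -
        (u p.1 - u p.2)⁻¹ •
          MonoidAlgebra.of ℂ (Equiv.Perm (Fin n)) (Equiv.swap p.1 p.2)).prod *
      MonoidAlgebra.of ℂ (Equiv.Perm (Fin n)) Fin.revPerm := by
  obtain ⟨k, rfl⟩ : ∃ k, n = k + 2 := ⟨n - 2, by omega⟩
  have hrev : accA (k + 2) (k + 1) = Fin.revPerm := by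
    show accP (k + 2) k (k + 1) = Fin.revPerm
    have h := acc_rev (n := k + 2) (by omega)
    norm_num at h
    exact h
  have hcol : ((lexL (k + 2)).map fun q => Ffac u q.1 q.2).prod
      = ((range (k + 1)).map fun m =>
          ((range (m + 1)).map fun j =>
            1 - cc u j (m + 1) • of' (sw (k + 2) j (m + 1))).prod).prod := by
    rw [reorder u (k + 2),
      show range (k + 2) = 0 :: (range (k + 1)).map Nat.succ from range_succ_eq_map,
      map_cons, prod_cons, map_map]
    simp only [range_zero, map_nil, prod_nil, one_mul, Function.comp_def, Function.comp_apply, Nat.succ_eq_add_one]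
    simp only [Ffac]
  have hB : ((lexPairs (k + 2)).map fun p =>
        (1 : MonoidAlgebra ℂ (Equiv.Perm (Fin (k + 2)))) -
          (u p.1 - u p.2)⁻¹ •
            MonoidAlgebra.of ℂ (Equiv.Perm (Fin (k + 2))) (Equiv.swap p.1 p.2)).prod
      = ((lexL (k + 2)).map fun q => Ffac u q.1 q.2).prod := by
    rw [lexPairs, prod_flat, lexL, prod_flat]
    refine congrArg List.prod ?_
    apply map_finRange_eq
    intro m hm
    refine congrArg List.prod ?_
    rw [map_map, rowL, map_map]
    apply map_filter_finRange
    · intro j hj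
      simp [Fin.lt_def]
    · intro j hj
      simp only [Function.comp_def, Function.comp_apply]
      rw [Ffac, sw, dif_pos ⟨by omega, by omega⟩, cc, dif_pos ⟨by omega, by omega⟩]
      rfl
  calc ((List.finRange (k + 2 - 1)).map fun i =>
      ((List.finRange (i.val + 1)).map fun j =>
        MonoidAlgebra.of ℂ (Equiv.Perm (Fin (k + 2)))
            (Equiv.swap ⟨i.val - j.val, by have := i.isLt; omega⟩
                        ⟨i.val - j.val + 1, by have := i.isLt; omega⟩) -
          (u ⟨j.val, by have := i.isLt; have := j.isLt; omega⟩ -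
            u ⟨i.val + 1, by have := i.isLt; omega⟩)⁻¹ •
            (1 : MonoidAlgebra ℂ (Equiv.Perm (Fin (k + 2))))).prod).prod
      = ((range (k + 1)).map fun m =>
          ((range (m + 1)).map fun j =>
            of' (sw (k + 2) (m - j) (m - j + 1)) - cc u j (m + 1) • 1).prod).prod := by
        refine congrArg List.prod ?_
        apply map_finRange_eq
        intro m hm
        refine congrArg List.prod ?_
        apply map_finRange_eq
        intro j hj
        rw [sw, dif_pos ⟨by omega, by omega⟩, cc, dif_pos ⟨by omega, by omega⟩]
        rfl
    _ = ((range (k + 1)).map fun m =>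
          ((range (m + 1)).map fun j =>
            1 - cc u j (m + 1) • of' (sw (k + 2) j (m + 1))).prod).prod *
          of' (accA (k + 2) (k + 1)) := outer_lemma u (k + 1) (by omega)
    _ = ((lexPairs (k + 2)).map fun p =>
          (1 : MonoidAlgebra ℂ (Equiv.Perm (Fin (k + 2)))) -
            (u p.1 - u p.2)⁻¹ •
              MonoidAlgebra.of ℂ (Equiv.Perm (Fin (k + 2))) (Equiv.swap p.1 p.2)).prod *
          MonoidAlgebra.of ℂ (Equiv.Perm (Fin (k + 2))) Fin.revPerm := by
        rw [hrev, hB, hcol]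
        rfl


end
end

section
/- Let V_0 and V_1 be finite-dimensional complex vector spaces, V := V_0 ⊕ V_1, and let Ĩ ∈ End(V⊗V) be the operator acting on x⊗y, with x ∈ V_a and y ∈ V_b (a, b ∈ {0,1}), as multiplication by (−1)^{ab}. Define R(u) := Ĩ − P/u for u ≠ 0, where P is the flip of V⊗V. Then: (1) for all u, v ∈ ℂ with u ≠ 0, v ≠ 0, u+v ≠ 0, the Yang–Baxter equation R_{1,2}(u) R_{1,3}(u+v) R_{2,3}(v) = R_{2,3}(v) R_{1,3}(u+v) R_{1,2}(u) holds on V⊗V⊗V; and (2) for all u ∈ ℂ with u ≠ 0, the unitarity condition R(u) · P R(−u) P = ((u²−1)/u²) · Id_{V⊗V} holds. -/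
open TensorProduct

noncomputable section

/-- The flip operator `P : x ⊗ y ↦ y ⊗ x` on `V ⊗ V`. -/
def flipL (V : Type*) [AddCommGroup V] [Module ℂ V] :
    V ⊗[ℂ] V →ₗ[ℂ] V ⊗[ℂ] V :=
  (TensorProduct.comm ℂ V V).toLinearMap

/-- `X_{1,2}` : the endomorphism `X` of `V ⊗ V` applied to the first two factors of
`V ⊗ V ⊗ V` and the identity on the third. -/
def op12 {V : Type*} [AddCommGroup V] [Module ℂ V]
    (X : V ⊗[ℂ] V →ₗ[ℂ] V ⊗[ℂ] V) :
    V ⊗[ℂ] (V ⊗[ℂ] V) →ₗ[ℂ] V ⊗[ℂ] (V ⊗[ℂ] V) :=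
  (TensorProduct.assoc ℂ V V V).toLinearMap ∘ₗ LinearMap.rTensor V X ∘ₗ
    (TensorProduct.assoc ℂ V V V).symm.toLinearMap

/-- `X_{2,3}` : the endomorphism `X` of `V ⊗ V` applied to the last two factors of
`V ⊗ V ⊗ V` and the identity on the first. -/
def op23 {V : Type*} [AddCommGroup V] [Module ℂ V]
    (X : V ⊗[ℂ] V →ₗ[ℂ] V ⊗[ℂ] V) :
    V ⊗[ℂ] (V ⊗[ℂ] V) →ₗ[ℂ] V ⊗[ℂ] (V ⊗[ℂ] V) :=
  LinearMap.lTensor V X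

/-- `X_{1,3}` : the endomorphism `X` of `V ⊗ V` applied to the first and third factors of
`V ⊗ V ⊗ V` and the identity on the second, i.e. `X_{1,3} = P_{2,3} X_{1,2} P_{2,3}`. -/
def op13 {V : Type*} [AddCommGroup V] [Module ℂ V]
    (X : V ⊗[ℂ] V →ₗ[ℂ] V ⊗[ℂ] V) :
    V ⊗[ℂ] (V ⊗[ℂ] V) →ₗ[ℂ] V ⊗[ℂ] (V ⊗[ℂ] V) :=
  op23 (flipL V) ∘ₗ op12 X ∘ₗ op23 (flipL V)

end

set_option maxHeartbeats 1600000

section Aux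
variable {V : Type*} [AddCommGroup V] [Module ℂ V]

lemma ybe_aux (I : V ⊗[ℂ] V →ₗ[ℂ] V ⊗[ℂ] V) (u v : ℂ) (hu : u ≠ 0) (hv : v ≠ 0)
    (huv : u + v ≠ 0) (x y z : V) (a b c : ℂ)
    (ha : a = 1 ∨ a = -1) (hb : b = 1 ∨ b = -1) (hc : c = 1 ∨ c = -1)
    (hxy : I (x ⊗ₜ[ℂ] y) = a • (x ⊗ₜ[ℂ] y)) (hyx : I (y ⊗ₜ[ℂ] x) = a • (y ⊗ₜ[ℂ] x))
    (hxz : I (x ⊗ₜ[ℂ] z) = b • (x ⊗ₜ[ℂ] z)) (hzx : I (z ⊗ₜ[ℂ] x) = b • (z ⊗ₜ[ℂ] x))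
    (hyz : I (y ⊗ₜ[ℂ] z) = c • (y ⊗ₜ[ℂ] z)) (hzy : I (z ⊗ₜ[ℂ] y) = c • (z ⊗ₜ[ℂ] y)) :
    op12 (I - u⁻¹ • flipL V) (op13 (I - (u+v)⁻¹ • flipL V) (op23 (I - v⁻¹ • flipL V)
      (x ⊗ₜ[ℂ] (y ⊗ₜ[ℂ] z)))) =
    op23 (I - v⁻¹ • flipL V) (op13 (I - (u+v)⁻¹ • flipL V) (op12 (I - u⁻¹ • flipL V)
      (x ⊗ₜ[ℂ] (y ⊗ₜ[ℂ] z)))) := by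
  simp only [op12, op13, op23, flipL, LinearMap.comp_apply, LinearMap.sub_apply,
    LinearMap.smul_apply, LinearEquiv.coe_coe, map_sub, map_smul, map_add,
    LinearMap.lTensor_tmul, LinearMap.rTensor_tmul, TensorProduct.assoc_tmul,
    TensorProduct.assoc_symm_tmul, TensorProduct.comm_tmul, tmul_sub, sub_tmul,
    tmul_smul, ← smul_tmul', hxy, hyx, hxz, hzx, hyz, hzy]
  rcases ha with rfl|rfl <;> rcases hb with rfl|rfl <;> rcases hc with rfl|rfl <;>
    match_scalars <;> field_simp <;> ring

lemma unit_aux (I : V ⊗[ℂ] V →ₗ[ℂ] V ⊗[ℂ] V) (u : ℂ) (hu : u ≠ 0) (x y : V) (a : ℂ)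
    (ha : a = 1 ∨ a = -1)
    (hxy : I (x ⊗ₜ[ℂ] y) = a • (x ⊗ₜ[ℂ] y)) (hyx : I (y ⊗ₜ[ℂ] x) = a • (y ⊗ₜ[ℂ] x)) :
    (I - u⁻¹ • flipL V) ((flipL V) ((I - (-u)⁻¹ • flipL V) ((flipL V) (x ⊗ₜ[ℂ] y)))) =
      ((u ^ 2 - 1) / u ^ 2) • (x ⊗ₜ[ℂ] y) := by
  simp only [flipL, LinearMap.sub_apply, LinearMap.smul_apply, LinearEquiv.coe_coe,
    map_sub, map_smul, TensorProduct.comm_tmul, hxy, hyx]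
  rcases ha with rfl|rfl <;> match_scalars <;> field_simp <;> ring

end Aux

/-- Let `V = V₀ ⊕ V₁` be a ℤ/2ℤ-graded finite-dimensional complex vector
space and let `Ĩ` be the endomorphism of `V ⊗ V` multiplying `x ⊗ y` by `(−1)^{ab}` for
homogeneous `x ∈ V_a`, `y ∈ V_b`. Then `R(u) := Ĩ − P/u` satisfies (1) the Yang--Baxter
equation for `u, v, u+v ≠ 0` and (2) the unitarity condition
`R(u) · P R(−u) P = ((u²−1)/u²) Id` for `u ≠ 0`. -/
theorem super_yang_solution
    (V₀ V₁ : Type*) [AddCommGroup V₀] [Module ℂ V₀] [AddCommGroup V₁] [Module ℂ V₁]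
    [FiniteDimensional ℂ V₀] [FiniteDimensional ℂ V₁]
    (I : (V₀ × V₁) ⊗[ℂ] (V₀ × V₁) →ₗ[ℂ] (V₀ × V₁) ⊗[ℂ] (V₀ × V₁))
    (hI00 : ∀ (x y : V₀), I (((x, 0) : V₀ × V₁) ⊗ₜ[ℂ] ((y, 0) : V₀ × V₁)) =
      ((x, 0) : V₀ × V₁) ⊗ₜ[ℂ] ((y, 0) : V₀ × V₁))
    (hI01 : ∀ (x : V₀) (y : V₁), I (((x, 0) : V₀ × V₁) ⊗ₜ[ℂ] ((0, y) : V₀ × V₁)) =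
      ((x, 0) : V₀ × V₁) ⊗ₜ[ℂ] ((0, y) : V₀ × V₁))
    (hI10 : ∀ (x : V₁) (y : V₀), I (((0, x) : V₀ × V₁) ⊗ₜ[ℂ] ((y, 0) : V₀ × V₁)) =
      ((0, x) : V₀ × V₁) ⊗ₜ[ℂ] ((y, 0) : V₀ × V₁))
    (hI11 : ∀ (x y : V₁), I (((0, x) : V₀ × V₁) ⊗ₜ[ℂ] ((0, y) : V₀ × V₁)) =
      -(((0, x) : V₀ × V₁) ⊗ₜ[ℂ] ((0, y) : V₀ × V₁)))
    (R : ℂ → ((V₀ × V₁) ⊗[ℂ] (V₀ × V₁) →ₗ[ℂ] (V₀ × V₁) ⊗[ℂ] (V₀ × V₁)))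
    (hR : ∀ u : ℂ, R u = I - u⁻¹ • flipL (V₀ × V₁)) :
    (∀ u v : ℂ, u ≠ 0 → v ≠ 0 → u + v ≠ 0 →
      op12 (R u) ∘ₗ op13 (R (u + v)) ∘ₗ op23 (R v) =
      op23 (R v) ∘ₗ op13 (R (u + v)) ∘ₗ op12 (R u)) ∧
    (∀ u : ℂ, u ≠ 0 →
      R u ∘ₗ (flipL (V₀ × V₁) ∘ₗ R (-u) ∘ₗ flipL (V₀ × V₁)) =
      ((u ^ 2 - 1) / u ^ 2) • LinearMap.id) := by
  -- I on homogeneous pairs, in `a • _` form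
  have h00 : ∀ (x y : V₀), I (((x, 0) : V₀ × V₁) ⊗ₜ[ℂ] ((y, 0) : V₀ × V₁)) =
      (1 : ℂ) • (((x, 0) : V₀ × V₁) ⊗ₜ[ℂ] ((y, 0) : V₀ × V₁)) := by
    intro x y; rw [one_smul]; exact hI00 x y
  have h01 : ∀ (x : V₀) (y : V₁), I (((x, 0) : V₀ × V₁) ⊗ₜ[ℂ] ((0, y) : V₀ × V₁)) =
      (1 : ℂ) • (((x, 0) : V₀ × V₁) ⊗ₜ[ℂ] ((0, y) : V₀ × V₁)) := by
    intro x y; rw [one_smul]; exact hI01 x y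
  have h10 : ∀ (x : V₁) (y : V₀), I (((0, x) : V₀ × V₁) ⊗ₜ[ℂ] ((y, 0) : V₀ × V₁)) =
      (1 : ℂ) • (((0, x) : V₀ × V₁) ⊗ₜ[ℂ] ((y, 0) : V₀ × V₁)) := by
    intro x y; rw [one_smul]; exact hI10 x y
  have h11 : ∀ (x y : V₁), I (((0, x) : V₀ × V₁) ⊗ₜ[ℂ] ((0, y) : V₀ × V₁)) =
      (-1 : ℂ) • (((0, x) : V₀ × V₁) ⊗ₜ[ℂ] ((0, y) : V₀ × V₁)) := by
    intro x y; rw [hI11 x y]; module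
  constructor
  · intro u v hu hv huv
    apply TensorProduct.ext'
    intro x m
    induction m using TensorProduct.induction_on with
    | zero => simp
    | add m n hm hn => simp only [tmul_add, map_add, hm, hn]
    | tmul y z =>
      obtain ⟨x1, x2⟩ := x
      obtain ⟨y1, y2⟩ := y
      obtain ⟨z1, z2⟩ := z
      have hx : ((x1, x2) : V₀ × V₁) = (x1, 0) + (0, x2) := by simp
      have hy : ((y1, y2) : V₀ × V₁) = (y1, 0) + (0, y2) := by simp
      have hz : ((z1, z2) : V₀ × V₁) = (z1, 0) + (0, z2) := by simp
      simp only [LinearMap.comp_apply, hR]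
      rw [hx, hy, hz]
      simp only [add_tmul, tmul_add, map_add,
        ybe_aux I u v hu hv huv (x1,0) (y1,0) (z1,0) 1 1 1 (Or.inl rfl) (Or.inl rfl)
          (Or.inl rfl) (h00 _ _) (h00 _ _) (h00 _ _) (h00 _ _) (h00 _ _) (h00 _ _),
        ybe_aux I u v hu hv huv (x1,0) (y1,0) ((0:V₀),z2) 1 1 1 (Or.inl rfl) (Or.inl rfl)
          (Or.inl rfl) (h00 _ _) (h00 _ _) (h01 _ _) (h10 _ _) (h01 _ _) (h10 _ _),
        ybe_aux I u v hu hv huv (x1,0) ((0:V₀),y2) (z1,0) 1 1 1 (Or.inl rfl) (Or.inl rfl)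
          (Or.inl rfl) (h01 _ _) (h10 _ _) (h00 _ _) (h00 _ _) (h10 _ _) (h01 _ _),
        ybe_aux I u v hu hv huv (x1,0) ((0:V₀),y2) ((0:V₀),z2) 1 1 (-1) (Or.inl rfl)
          (Or.inl rfl) (Or.inr rfl) (h01 _ _) (h10 _ _) (h01 _ _) (h10 _ _) (h11 _ _)
          (h11 _ _),
        ybe_aux I u v hu hv huv ((0:V₀),x2) (y1,0) (z1,0) 1 1 1 (Or.inl rfl) (Or.inl rfl)
          (Or.inl rfl) (h10 _ _) (h01 _ _) (h10 _ _) (h01 _ _) (h00 _ _) (h00 _ _),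
        ybe_aux I u v hu hv huv ((0:V₀),x2) (y1,0) ((0:V₀),z2) 1 (-1) 1 (Or.inl rfl)
          (Or.inr rfl) (Or.inl rfl) (h10 _ _) (h01 _ _) (h11 _ _) (h11 _ _) (h01 _ _)
          (h10 _ _),
        ybe_aux I u v hu hv huv ((0:V₀),x2) ((0:V₀),y2) (z1,0) (-1) 1 1 (Or.inr rfl)
          (Or.inl rfl) (Or.inl rfl) (h11 _ _) (h11 _ _) (h10 _ _) (h01 _ _) (h10 _ _)
          (h01 _ _),
        ybe_aux I u v hu hv huv ((0:V₀),x2) ((0:V₀),y2) ((0:V₀),z2) (-1) (-1) (-1)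
          (Or.inr rfl) (Or.inr rfl) (Or.inr rfl) (h11 _ _) (h11 _ _) (h11 _ _) (h11 _ _)
          (h11 _ _) (h11 _ _)]
  · intro u hu
    apply TensorProduct.ext'
    intro x y
    obtain ⟨x1, x2⟩ := x
    obtain ⟨y1, y2⟩ := y
    have hx : ((x1, x2) : V₀ × V₁) = (x1, 0) + (0, x2) := by simp
    have hy : ((y1, y2) : V₀ × V₁) = (y1, 0) + (0, y2) := by simp
    simp only [LinearMap.comp_apply, hR, LinearMap.smul_apply, LinearMap.id_apply]
    rw [hx, hy]
    simp only [add_tmul, tmul_add, map_add, smul_add,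
      unit_aux I u hu (x1,0) (y1,0) 1 (Or.inl rfl) (h00 _ _) (h00 _ _),
      unit_aux I u hu (x1,0) ((0:V₀),y2) 1 (Or.inl rfl) (h01 _ _) (h10 _ _),
      unit_aux I u hu ((0:V₀),x2) (y1,0) 1 (Or.inl rfl) (h10 _ _) (h01 _ _),
      unit_aux I u hu ((0:V₀),x2) ((0:V₀),y2) (-1) (Or.inr rfl) (h11 _ _) (h11 _ _)]
end

section
/- Let A be a unital associative ℂ-algebra, q ∈ ℂ with q ≠ 0, and a, b ∈ A satisfying the quadratic relations a² = (q−q⁻¹)a + 1, b² = (q−q⁻¹)b + 1 and the braid relation a b a = b a b. For α ∈ ℂ with α ∉ {0,1}, set a(α) := a + (q−q⁻¹)/(α⁻¹−1)·1 and b(α) := b + (q−q⁻¹)/(α⁻¹−1)·1. Then for all α, β ∈ ℂ with α, β, αβ ∉ {0,1}: a(α) b(αβ) a(β) = b(β) a(αβ) b(α). -/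
set_option maxHeartbeats 800000 in
private lemma baxterized_aux (s u v w : ℂ) (hu : u ≠ 0) (hv : v ≠ 0) (hw : w ≠ 0)
    (h : u * w + u + w = v) :
    (s / v) * s + (s / v) * (s / w) + (s / u) * (s / v) = (s / u) * (s / w) := by
  have hv' : u * w + u + w ≠ 0 := by rw [h]; exact hv
  rw [← h]
  field_simp
  exact mul_div_cancel_right₀ _ (by rwa [show u * (w + 1) + w = u * w + u + w by ring])

set_option maxHeartbeats 1600000 in
/-- Baxterized elements in an algebra with two Hecke-type generators:
if `a² = (q−q⁻¹)a + 1`, `b² = (q−q⁻¹)b + 1` and `aba = bab`, then the Baxterized elements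
`a(α) := a + (q−q⁻¹)/(α⁻¹−1)` satisfy `a(α) b(αβ) a(β) = b(β) a(αβ) b(α)` for all
`α, β` with `α, β, αβ ∉ {0,1}`. -/
theorem baxterized_hecke_braid
    (A : Type*) [Ring A] [Algebra ℂ A] (q : ℂ) (hq : q ≠ 0) (a b : A)
    (ha : a ^ 2 = (q - q⁻¹) • a + 1)
    (hb : b ^ 2 = (q - q⁻¹) • b + 1)
    (hbr : a * b * a = b * a * b)
    (α β : ℂ) (hα0 : α ≠ 0) (hα1 : α ≠ 1) (hβ0 : β ≠ 0) (hβ1 : β ≠ 1)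
    (hαβ0 : α * β ≠ 0) (hαβ1 : α * β ≠ 1) :
    (a + ((q - q⁻¹) / (α⁻¹ - 1)) • (1 : A)) *
      (b + ((q - q⁻¹) / ((α * β)⁻¹ - 1)) • (1 : A)) *
      (a + ((q - q⁻¹) / (β⁻¹ - 1)) • (1 : A)) =
    (b + ((q - q⁻¹) / (β⁻¹ - 1)) • (1 : A)) *
      (a + ((q - q⁻¹) / ((α * β)⁻¹ - 1)) • (1 : A)) *
      (b + ((q - q⁻¹) / (α⁻¹ - 1)) • (1 : A)) := by
  set s : ℂ := q - q⁻¹ with hs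
  set x : ℂ := s / (α⁻¹ - 1) with hx
  set y : ℂ := s / ((α * β)⁻¹ - 1) with hy
  set z : ℂ := s / (β⁻¹ - 1) with hz
  have ha' : a * a = s • a + 1 := by rw [← sq]; exact ha
  have hb' : b * b = s • b + 1 := by rw [← sq]; exact hb
  have hα1' : α⁻¹ - 1 ≠ 0 := by
    intro h
    apply hα1
    have h2 : α⁻¹ = 1 := by linear_combination h
    rw [inv_eq_one] at h2
    exact h2
  have hβ1' : β⁻¹ - 1 ≠ 0 := by
    intro h
    apply hβ1
    have h2 : β⁻¹ = 1 := by linear_combination h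
    rw [inv_eq_one] at h2
    exact h2
  have hαβ1' : (α * β)⁻¹ - 1 ≠ 0 := by
    intro h
    apply hαβ1
    have h2 : (α * β)⁻¹ = 1 := by linear_combination h
    rw [inv_eq_one] at h2
    exact h2
  have huvw : (α⁻¹ - 1) * (β⁻¹ - 1) + (α⁻¹ - 1) + (β⁻¹ - 1) = (α * β)⁻¹ - 1 := by
    field_simp
    ring
  have hkey : y * s + y * z + x * y = x * z := by
    rw [hx, hy, hz]
    exact baxterized_aux s _ _ _ hα1' hαβ1' hβ1' huvw
  have L : (a + x • (1 : A)) * (b + y • (1 : A)) * (a + z • (1 : A)) =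
      a * b * a + z • (a * b) + x • (b * a) + (y * s + y * z + x * y) • a + (x * z) • b +
        (y + x * y * z) • (1 : A) := by
    simp only [mul_add, add_mul, smul_mul_assoc, mul_smul_comm, one_mul, mul_one, smul_smul,
      mul_assoc]
    rw [show a * (b * a) = a * b * a by rw [mul_assoc]]
    rw [ha']
    simp only [smul_add, smul_smul]
    module
  have R : (b + z • (1 : A)) * (a + y • (1 : A)) * (b + x • (1 : A)) =
      b * a * b + x • (b * a) + z • (a * b) + (y * s + y * x + z * y) • b + (z * x) • a +
        (y + z * y * x) • (1 : A) := by
    simp only [mul_add, add_mul, smul_mul_assoc, mul_smul_comm, one_mul, mul_one, smul_smul,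
      mul_assoc]
    rw [show b * (a * b) = b * a * b by rw [mul_assoc]]
    rw [hb']
    simp only [smul_add, smul_smul]
    module
  rw [L, R, hbr, hkey, show y * s + y * x + z * y = x * z by linear_combination hkey,
    show z * x = x * z by ring, show z * y * x = x * y * z by ring]
  module
end
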